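/- Suppose the lower semicontinuous metric d generates the topology of K (d metrizes K). Then every closed linear subspace X of C(K) all of whose elements are d-Lipschitz functions is finite-dimensional. -/

import Mathlib

open BoundedContinuousFunction in
set_option synthInstance.maxHeartbeats 1000000 in
set_option maxHeartbeats 2000000 in
/-- If the lower semicontinuous metric `d` generates the topology of `K`,
then every closed linear subspace of `C(K)` consisting of `d`-Lipschitz functions is
finite-dimensional. -/
theorem lipschitz_subspace_finite_dimensional_of_metrizes
    {K : Type*} [TopologicalSpace K] [CompactSpace K] [T2Space K]
    (d : K → K → ℝ)
    (hd_nonneg : ∀ x y, 0 ≤ d x y)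
    (hd_symm : ∀ x y, d x y = d y x)
    (hd_eq : ∀ x y, d x y = 0 ↔ x = y)
    (hd_tri : ∀ x y z, d x z ≤ d x y + d y z)
    (hd_lsc : LowerSemicontinuous fun p : K × K => d p.1 p.2)
    (hd_metrizes : ∀ U : Set K, IsOpen U ↔ ∀ x ∈ U, ∃ ε > 0, {y : K | d x y < ε} ⊆ U)
    (X : Submodule ℝ C(K, ℝ)) (hXclosed : IsClosed (X : Set C(K, ℝ)))
    (hXlip : ∀ f ∈ X, ∃ L ≥ 0, ∀ t₁ t₂ : K, |f t₁ - f t₂| ≤ L * d t₁ t₂) :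
    FiniteDimensional ℝ X := by
  classical
  -- Equip `K` with the metric `d`, whose topology agrees with the given one.
  letI : MetricSpace K := MetricSpace.ofDistTopology d (fun x => (hd_eq x x).2 rfl) hd_symm hd_tri
    (fun s => (hd_metrizes s).trans <| by
      refine forall₂_congr fun x _ => exists_congr fun ε => and_congr_right fun _ => ?_
      exact ⟨fun h y hy => h hy, fun h y hy => h y hy⟩)
    (fun x y h => (hd_eq x y).1 h)
  have hdist : ∀ x y : K, dist x y = d x y := fun _ _ => rfl
  haveI : CompleteSpace X := hXclosed.completeSpace_coe
  set E : ℕ → Set X := fun n =>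
    {f : X | ∀ t₁ t₂ : K, |(f : C(K, ℝ)) t₁ - (f : C(K, ℝ)) t₂| ≤ n * d t₁ t₂} with hE
  have hEclosed : ∀ n, IsClosed (E n) := by
    intro n
    have heq : E n = ⋂ t₁, ⋂ t₂,
        {f : X | |(f : C(K, ℝ)) t₁ - (f : C(K, ℝ)) t₂| ≤ n * d t₁ t₂} := by
      ext f; simp [hE, Set.mem_iInter]
    rw [heq]
    refine isClosed_iInter fun t₁ => isClosed_iInter fun t₂ => ?_
    have hc : Continuous fun f : X => |(f : C(K, ℝ)) t₁ - (f : C(K, ℝ)) t₂| :=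
      (((continuous_eval_const t₁).comp continuous_subtype_val).sub
        ((continuous_eval_const t₂).comp continuous_subtype_val)).abs
    exact isClosed_le hc continuous_const
  have hcover : (⋃ n, E n) = Set.univ := by
    ext f
    simp only [Set.mem_iUnion, Set.mem_univ, iff_true, hE, Set.mem_setOf_eq]
    obtain ⟨L, hL0, hL⟩ := hXlip f.1 f.2
    exact ⟨⌈L⌉₊, fun t₁ t₂ => (hL t₁ t₂).trans
      (mul_le_mul_of_nonneg_right (Nat.le_ceil L) (hd_nonneg _ _))⟩
  obtain ⟨n, f₀, hf₀⟩ := nonempty_interior_of_iUnion_of_closed hEclosed hcover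
  obtain ⟨r, hr0, hball⟩ := Metric.isOpen_iff.1 isOpen_interior f₀ hf₀
  have hEn : Metric.ball f₀ r ⊆ E n := hball.trans interior_subset
  -- Uniform Lipschitz bound on all of `X`
  have key : ∀ f : X, ∀ t₁ t₂ : K,
      |(f : C(K, ℝ)) t₁ - (f : C(K, ℝ)) t₂| ≤ (4 * n / r) * ‖f‖ * d t₁ t₂ := by
    intro f t₁ t₂
    rcases eq_or_ne f 0 with rfl | hf
    · simp
    · have hfn : 0 < ‖f‖ := norm_pos_iff.2 hf
      set c : ℝ := r / (2 * ‖f‖) with hc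
      have hc0 : 0 < c := div_pos hr0 (by positivity)
      have hmem : f₀ + c • f ∈ Metric.ball f₀ r := by
        rw [Metric.mem_ball, dist_eq_norm, add_sub_cancel_left]
        have hns : ‖c • f‖ = |c| * ‖f‖ := by
          have := norm_smul c (f : C(K, ℝ)); exact this
        refine lt_of_eq_of_lt hns ?_
        rw [abs_of_pos hc0, hc]
        have heq2 : r / (2 * ‖f‖) * ‖f‖ = r / 2 := by
          rw [div_mul_eq_mul_div, mul_comm 2 ‖f‖, ← div_div, mul_div_assoc,
            div_self (ne_of_gt hfn), mul_one]
        rw [heq2]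
        linarith
      have h1 := hEn hmem t₁ t₂
      have h2 := hEn (Metric.mem_ball_self hr0) t₁ t₂
      have hco : ∀ t : K, ((f₀ + c • f : X) : C(K, ℝ)) t = (f₀ : C(K, ℝ)) t + c * (f : C(K, ℝ)) t := by
        intro t; simp
      rw [hco t₁, hco t₂] at h1
      have h3 : |c * (f : C(K, ℝ)) t₁ - c * (f : C(K, ℝ)) t₂| ≤ 2 * n * d t₁ t₂ := by
        have := abs_sub_abs_le_abs_sub (((f₀ : C(K, ℝ)) t₁ + c * (f : C(K, ℝ)) t₁)
          - ((f₀ : C(K, ℝ)) t₂ + c * (f : C(K, ℝ)) t₂)) ((f₀ : C(K, ℝ)) t₁ - (f₀ : C(K, ℝ)) t₂)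
        calc |c * (f : C(K, ℝ)) t₁ - c * (f : C(K, ℝ)) t₂|
            = |(((f₀ : C(K, ℝ)) t₁ + c * (f : C(K, ℝ)) t₁)
              - ((f₀ : C(K, ℝ)) t₂ + c * (f : C(K, ℝ)) t₂)) - ((f₀ : C(K, ℝ)) t₁ - (f₀ : C(K, ℝ)) t₂)| := by
              ring_nf
          _ ≤ |((f₀ : C(K, ℝ)) t₁ + c * (f : C(K, ℝ)) t₁)
              - ((f₀ : C(K, ℝ)) t₂ + c * (f : C(K, ℝ)) t₂)| + |(f₀ : C(K, ℝ)) t₁ - (f₀ : C(K, ℝ)) t₂| :=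
              abs_sub _ _
          _ ≤ n * d t₁ t₂ + n * d t₁ t₂ := add_le_add h1 h2
          _ = 2 * n * d t₁ t₂ := by ring
      rw [← mul_sub, abs_mul, abs_of_pos hc0] at h3
      have h4 : |(f : C(K, ℝ)) t₁ - (f : C(K, ℝ)) t₂| ≤ (2 * n / c) * d t₁ t₂ := by
        rw [div_mul_eq_mul_div, le_div_iff₀ hc0, mul_comm]
        linarith
      have hceq : 2 * (n : ℝ) / c = 4 * n / r * ‖f‖ := by
        rw [hc]
        rw [div_div_eq_mul_div, div_mul_eq_mul_div, div_eq_div_iff (ne_of_gt hr0) (ne_of_gt hr0)]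
        ring
      rw [hceq] at h4
      exact h4
  -- The closed unit ball of `X` is compact, by Arzelà–Ascoli.
  set C : ℝ := 4 * n / r with hCdef
  have hC0 : 0 ≤ C := by positivity
  set B : Set X := Metric.closedBall 0 1 with hB
  have hnormB : ∀ f : X, f ∈ B → ‖(f : C(K, ℝ))‖ ≤ 1 := by
    intro f hf
    have : ‖f‖ ≤ 1 := by simpa [hB, Metric.mem_closedBall, dist_zero_right] using hf
    exact this
  have hlipB : ∀ f : X, f ∈ B → ∀ t₁ t₂ : K,
      |(f : C(K, ℝ)) t₁ - (f : C(K, ℝ)) t₂| ≤ C * d t₁ t₂ := by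
    intro f hf t₁ t₂
    refine (key f t₁ t₂).trans ?_
    have h1 : C * ‖f‖ ≤ C * 1 := mul_le_mul_of_nonneg_left (hnormB f hf) hC0
    have := mul_le_mul_of_nonneg_right h1 (hd_nonneg t₁ t₂)
    simpa [hCdef] using this
  set Φ := ContinuousMap.isometryEquivBoundedOfCompact K ℝ with hΦ
  have hΦapp : ∀ (g : C(K, ℝ)) (t : K), (Φ g) t = g t := fun _ _ => rfl
  have hvalB : ((↑) '' B : Set C(K, ℝ)) = (X : Set C(K, ℝ)) ∩ Metric.closedBall 0 1 := by
    ext g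
    constructor
    · rintro ⟨f, hf, rfl⟩
      refine ⟨f.2, ?_⟩
      rw [Metric.mem_closedBall, dist_zero_right]
      exact hnormB f hf
    · rintro ⟨hgX, hg⟩
      refine ⟨⟨g, hgX⟩, ?_, rfl⟩
      rw [Metric.mem_closedBall, dist_zero_right] at hg ⊢
      exact hg
  set A : Set (K →ᵇ ℝ) := Φ '' ((↑) '' B) with hA
  have hAclosed : IsClosed A := by
    rw [hA, hvalB]
    exact Φ.toHomeomorph.isClosed_image.2 (hXclosed.inter Metric.isClosed_closedBall)
  have hAcompact : IsCompact A := by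
    refine BoundedContinuousFunction.arzela_ascoli₂ (Metric.closedBall (0 : ℝ) 1)
      (isCompact_closedBall 0 1) A hAclosed ?_ ?_
    · rintro g x hg
      obtain ⟨g', ⟨f, hf, rfl⟩, rfl⟩ := hg
      rw [Metric.mem_closedBall, dist_zero_right, hΦapp, Real.norm_eq_abs]
      exact (ContinuousMap.norm_coe_le_norm _ x).trans (hnormB f hf)
    · intro x
      rw [Metric.equicontinuousAt_iff]
      intro ε hε
      refine ⟨ε / (C + 1), by positivity, fun y hy g => ?_⟩
      obtain ⟨g', ⟨f, hf, rfl⟩, hgeq⟩ := g.2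
      have hbd : |(f : C(K, ℝ)) x - (f : C(K, ℝ)) y| ≤ C * d x y := hlipB f hf x y
      have hgx : (g : K → ℝ) x = (f : C(K, ℝ)) x := by rw [← hgeq]; exact hΦapp _ _
      have hgy : (g : K → ℝ) y = (f : C(K, ℝ)) y := by rw [← hgeq]; exact hΦapp _ _
      rw [Real.dist_eq, hgx, hgy]
      have hdxy : d x y < ε / (C + 1) := by rw [← hdist, dist_comm]; exact hy
      have h5 : C * d x y ≤ C * (ε / (C + 1)) :=
        mul_le_mul_of_nonneg_left (le_of_lt hdxy) hC0
      have h6 : C * (ε / (C + 1)) < ε := by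
        rw [mul_div_assoc', div_lt_iff₀ (by positivity)]
        nlinarith
      exact lt_of_le_of_lt (hbd.trans h5) h6
  have hBcompact : IsCompact B := by
    have h1 : IsCompact (Φ.symm '' A) := hAcompact.image Φ.symm.continuous
    have h2 : Φ.symm '' A = (↑) '' B := by
      rw [hA, ← Set.image_comp]
      simp [Function.comp_def]
    rw [h2] at h1
    exact Topology.IsEmbedding.subtypeVal.isCompact_iff.2 h1
  exact FiniteDimensional.of_isCompact_closedBall₀ ℝ one_pos hBcompact
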